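/- Let μ be an infinite cardinal, κ a regular uncountable cardinal with μ < κ, and α an ordinal with κ ≤ α. Let ℬ be a complete Boolean algebra containing a family of nonzero elements x_f, indexed by the finite partial functions f from α to μ, such that: x_f ≤ x_g whenever g ⊆ f; x_f ⊓ x_g = 0 whenever f(β) ≠ g(β) for some β ∈ dom(f) ∩ dom(g); and the set of all x_f is dense in ℬ (every nonzero element of ℬ lies above some x_f). Then for every ideal I on ℕ and every fast sequence m, ℬ has the (κ,I,m)-c.c. -/

import Mathlib

universe u v

/-- `mCirc m i = ∏_{j<i} m j` (so `mCirc m 0 = 1`). -/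
def mCirc (m : ℕ → ℕ) (i : ℕ) : ℕ := ∏ j ∈ Finset.range i, m j

/-- A *fast sequence* is `m : ℕ → ℕ` with `m 0 ≥ 2` and
`m i ≥ ((m°(i))^(i^i))^(4·(m°(i))^(i^i))` for all `i`. -/
def FastSeq (m : ℕ → ℕ) : Prop :=
  2 ≤ m 0 ∧ ∀ i, (mCirc m i ^ i ^ i) ^ (4 * mCirc m i ^ i ^ i) ≤ m i

/-- An ideal on `ℕ`: contains all finite sets, closed under subsets and finite
unions. -/
def IsIdealOnNat (I : Set (Set ℕ)) : Prop :=
  (∀ v : Set ℕ, v.Finite → v ∈ I) ∧ (∀ v ∈ I, ∀ w ⊆ v, w ∈ I) ∧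
    (∀ v ∈ I, ∀ w ∈ I, v ∪ w ∈ I)

/-- A subset `S` of a complete Boolean algebra `B` is a complete subalgebra if it
contains `⊥` and is closed under complements, binary meets, and arbitrary suprema
(the latter computed in `B`; this is the meaning of `S ⋖ B`). -/
def IsCompleteSubalgebra {B : Type v} [CompleteBooleanAlgebra B] (S : Set B) : Prop :=
  ⊥ ∈ S ∧ (∀ a ∈ S, aᶜ ∈ S) ∧ (∀ a ∈ S, ∀ b ∈ S, a ⊓ b ∈ S) ∧
    ∀ T ⊆ S, sSup T ∈ S

/-- The `κ`-c.c. for the (sub)algebra `S` of `B`: every antichain of nonzero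
elements of `S` has cardinality `< κ`.  (Elements of `Set B` live in universe `v`,
so the cardinality is compared after lifting.) -/
def KappaCCOn (κ : Cardinal.{u}) {B : Type v} [CompleteBooleanAlgebra B]
    (S : Set B) : Prop :=
  ∀ A : Set B, A ⊆ S → (∀ a ∈ A, a ≠ ⊥) →
    (A.Pairwise fun a b => a ⊓ b = ⊥) →
    Cardinal.lift.{u} (Cardinal.mk ↥A) < Cardinal.lift.{v} κ

/-- The `(κ, I, m)`-chain condition for the (sub)algebra `S` of the complete
Boolean algebra `B`.  The index set of ordinals below `κ` is represented by the
type `κ.ord.ToType`. -/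
def CCCOn (κ : Cardinal.{u}) (I : Set (Set ℕ)) (m : ℕ → ℕ)
    {B : Type v} [CompleteBooleanAlgebra B] (S : Set B) : Prop :=
  ∀ U₂ : Set κ.ord.ToType, Cardinal.mk ↥U₂ = κ →
    ∀ a : κ.ord.ToType → B, (∀ α ∈ U₂, a α ∈ S ∧ a α ≠ ⊥) →
      ∃ j : ℕ, ∃ U₁ ⊆ U₂, Cardinal.mk ↥U₁ = κ ∧ ∃ A ∈ I,
        ∀ n : ℕ, n ∉ A → ∀ u : Finset κ.ord.ToType, ↑u ⊆ U₁ →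
          ∀ i : ℕ, i + j < n →
            m n < u.card * mCirc m n ^ n ^ i → u.card ≤ m n →
            ∃ v ⊆ u, u.card ≤ v.card * mCirc m n ^ n ^ (i + j) ∧
              v.inf a ≠ ⊥

/-- `a` is below the projection of `b` (relative to the subalgebra `S₁`):
every nonzero `c ∈ S₁` with `c ≤ a` satisfies `c ⊓ b ≠ ⊥`. -/
def BelowProj {B : Type v} [CompleteBooleanAlgebra B] (S₁ : Set B) (a b : B) :
    Prop :=
  ∀ c ∈ S₁, c ≠ ⊥ → c ≤ a → c ⊓ b ≠ ⊥

/-- The pair `(S₁, S₂)` of subalgebras of `B` has the `(κ, I, m)`-pattern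
transfer property. -/
def PatternTransfer (κ : Cardinal.{u}) (I : Set (Set ℕ)) (m : ℕ → ℕ)
    {B : Type v} [CompleteBooleanAlgebra B] (S₁ S₂ : Set B) : Prop :=
  IsCompleteSubalgebra S₁ ∧ IsCompleteSubalgebra S₂ ∧ S₁ ⊆ S₂ ∧
  KappaCCOn κ S₁ ∧
  ∀ U₂ : Set κ.ord.ToType, Cardinal.mk ↥U₂ = κ →
    ∀ a2 : κ.ord.ToType → B, (∀ α ∈ U₂, a2 α ∈ S₂ ∧ a2 α ≠ ⊥) →
      (∀ α ∈ U₂, ∀ β ∈ U₂, a2 α = a2 β → α = β) →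
      ∃ j : ℕ, ∃ U₁ ⊆ U₂, Cardinal.mk ↥U₁ = κ ∧ ∃ A ∈ I,
        ∃ a1 : κ.ord.ToType → B,
          (∀ α ∈ U₁, a1 α ∈ S₁ ∧ a1 α ≠ ⊥ ∧ BelowProj S₁ (a1 α) (a2 α)) ∧
          ∀ n : ℕ, n ∉ A → ∀ i : ℕ, i + j < n →
            ∀ u : Finset κ.ord.ToType, ↑u ⊆ U₁ →
              m n < u.card * mCirc m n ^ n ^ i → u.card < m n →
              ∀ a ∈ S₁, a ≠ ⊥ → a ≤ u.inf a1 →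
                ∃ v ⊆ u, u.card ≤ v.card * mCirc m n ^ n ^ (i + j) ∧
                  v.inf a2 ⊓ a ≠ ⊥

/-- `Valid μ α s f`: the finite partial function with domain `s` and values given
by `f` is a finite partial function from `α` to `μ`. -/
def ValidPF (μ : Cardinal.{u}) (α : Ordinal.{u}) (s : Finset Ordinal.{u})
    (f : Ordinal.{u} → Ordinal.{u}) : Prop :=
  ∀ β ∈ s, β < α ∧ f β < μ.ord

section AuxLemmas
open Cardinal
universe w

lemma aux_pigeonhole {ι X : Type u} {κ : Cardinal.{u}} (hreg : κ.IsRegular)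
    {S : Set ι} (hS : #S = κ) (h : ι → X) (hX : #X < κ) :
    ∃ x : X, #{t | t ∈ S ∧ h t = x} = κ := by
  by_contra hc
  push_neg at hc
  have hlt : ∀ x, #{t | t ∈ S ∧ h t = x} < κ := fun x =>
    lt_of_le_of_ne (hS ▸ mk_le_mk_of_subset (fun t ht => ht.1)) (hc x)
  have hcov : S ⊆ ⋃ x, {t | t ∈ S ∧ h t = x} := fun t ht =>
    Set.mem_iUnion.2 ⟨h t, ht, rfl⟩
  have : κ ≤ Cardinal.sum fun x => #{t | t ∈ S ∧ h t = x} :=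
    hS ▸ (mk_le_mk_of_subset hcov).trans mk_iUnion_le_sum_mk
  exact absurd (Cardinal.sum_lt_of_isRegular hreg hX hlt) (not_lt.2 this)

lemma aux_small_iUnion {ι X : Type u} {κ : Cardinal.{u}} (hreg : κ.IsRegular)
    (A : X → Set ι) (hX : #X < κ) (hA : ∀ x, #(A x) < κ) : #(⋃ x, A x) < κ :=
  lt_of_le_of_lt mk_iUnion_le_sum_mk (Cardinal.sum_lt_of_isRegular hreg hX hA)

lemma aux_small_biUnion {ι : Type u} {γ : Type w} {κ : Cardinal.{u}} (hκ : ℵ₀ ≤ κ)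
    (fs : Finset γ) (A : γ → Set ι) (hA : ∀ x ∈ fs, #(A x) < κ) :
    #(⋃ x ∈ fs, A x) < κ := by
  classical
  induction fs using Finset.induction_on with
  | empty => simpa using lt_of_lt_of_le aleph0_pos hκ
  | @insert a fs ha ih =>
    rw [Finset.set_biUnion_insert]
    exact lt_of_le_of_lt (mk_union_le _ _)
      (Cardinal.add_lt_of_lt hκ (hA a (Finset.mem_insert_self _ _))
        (ih fun x hx => hA x (Finset.mem_insert_of_mem hx)))

lemma aux_delta {ι : Type u} {γ : Type w} [DecidableEq γ] {κ : Cardinal.{u}}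
    (hreg : κ.IsRegular) (hκ : ℵ₀ < κ) :
    ∀ n : ℕ, ∀ s : ι → Finset γ, ∀ S : Set ι, #S = κ → (∀ t ∈ S, (s t).card ≤ n) →
    ∃ S' ⊆ S, #S' = κ ∧ ∃ r : Finset γ,
      ∀ a ∈ S', ∀ b ∈ S', a ≠ b → s a ∩ s b ⊆ r := by
  intro n
  induction n with
  | zero =>
    intro s S hS hn
    refine ⟨S, subset_rfl, hS, ∅, fun a ha b hb hab => ?_⟩
    have : s a = ∅ := Finset.card_eq_zero.1 (Nat.le_zero.1 (hn a ha))
    simp [this]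
  | succ n ih =>
    intro s S hS hn
    by_cases hx : ∃ x : γ, #{t | t ∈ S ∧ x ∈ s t} = κ
    · obtain ⟨x, hxκ⟩ := hx
      obtain ⟨S', hS'sub, hS'κ, r', hr'⟩ :=
        ih (fun t => (s t).erase x) {t | t ∈ S ∧ x ∈ s t} hxκ (by
          intro t ht
          rw [Finset.card_erase_of_mem ht.2]
          exact Nat.sub_le_of_le_add (hn t ht.1))
      refine ⟨S', fun t ht => (hS'sub ht).1, hS'κ, insert x r', ?_⟩
      intro a ha b hb hab y hy
      rw [Finset.mem_insert]
      rcases eq_or_ne y x with h | h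
      · exact Or.inl h
      · refine Or.inr (hr' a ha b hb hab ?_)
        rw [Finset.mem_inter] at hy ⊢
        exact ⟨Finset.mem_erase.2 ⟨h, hy.1⟩, Finset.mem_erase.2 ⟨h, hy.2⟩⟩
    · push_neg at hx
      have hfib : ∀ x : γ, #{t | t ∈ S ∧ x ∈ s t} < κ := fun x =>
        lt_of_le_of_ne (hS ▸ mk_le_mk_of_subset (fun t ht => ht.1)) (hx x)
      obtain ⟨D, hD⟩ := zorn_subset
        {D : Set ι | D ⊆ S ∧ D.Pairwise fun a b => Disjoint (s a) (s b)} (by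
          intro c hc hchain
          refine ⟨⋃₀ c, ⟨fun t ht => ?_, ?_⟩, fun d hd => Set.subset_sUnion_of_mem hd⟩
          · obtain ⟨d, hd, htd⟩ := ht
            exact (hc hd).1 htd
          · intro a ha b hb hab
            obtain ⟨c₁, hc₁, ha1⟩ := ha
            obtain ⟨c₂, hc₂, hb2⟩ := hb
            rcases hchain.total hc₁ hc₂ with h | h
            · exact (hc hc₂).2 (h ha1) hb2 hab
            · exact (hc hc₁).2 ha1 (h hb2) hab)
      have hDS : D ⊆ S := hD.prop.1
      have hDκ : #D = κ := by
        rcases lt_or_eq_of_le ((mk_le_mk_of_subset hDS).trans_eq hS) with hlt | heq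
        · exfalso
          set Bad : Set ι := ⋃ d : D, ⋃ x ∈ s (d : ι), {t | t ∈ S ∧ x ∈ s t} with hBad
          have hBadκ : #Bad < κ :=
            aux_small_iUnion hreg _ hlt fun d =>
              aux_small_biUnion hreg.aleph0_le _ _ fun x _ => hfib x
          have hDBκ : #(D ∪ Bad : Set ι) < κ :=
            lt_of_le_of_lt (mk_union_le _ _) (Cardinal.add_lt_of_lt hreg.aleph0_le hlt hBadκ)
          have hns : ¬ S ⊆ D ∪ Bad := fun h =>
            absurd (hS ▸ mk_le_mk_of_subset h) (not_le.2 hDBκ)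
          obtain ⟨t, htS, htn⟩ := Set.not_subset.1 hns
          have htD : t ∉ D := fun h => htn (Or.inl h)
          have htBad : t ∉ Bad := fun h => htn (Or.inr h)
          have hdisj : ∀ d ∈ D, Disjoint (s t) (s d) := by
            intro d hd
            rw [Finset.disjoint_left]
            intro y hyt hyd
            exact htBad (Set.mem_iUnion.2 ⟨⟨d, hd⟩,
              Set.mem_biUnion hyd ⟨htS, hyt⟩⟩)
          have hmem : insert t D ∈
              {D : Set ι | D ⊆ S ∧ D.Pairwise fun a b => Disjoint (s a) (s b)} := by
            constructor
            · exact Set.insert_subset htS hDS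
            · rw [Set.pairwise_insert]
              exact ⟨hD.prop.2, fun b hb _ => ⟨hdisj b hb, (hdisj b hb).symm⟩⟩
          exact htD (hD.2 hmem (Set.subset_insert _ _) (Set.mem_insert _ _))
        · exact heq
      exact ⟨D, hDS, hDκ, ∅, fun a ha b hb hab => by
        rw [Finset.disjoint_iff_inter_eq_empty.1 (hD.prop.2 ha hb hab)]⟩

lemma aux_mCirc_pos {m : ℕ → ℕ} (hm : FastSeq m) : ∀ n, 0 < mCirc m n ∧ 0 < m n := by
  intro n
  induction n with
  | zero => exact ⟨by simp [mCirc], lt_of_lt_of_le two_pos hm.1⟩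
  | succ k ih =>
    have h1 : 0 < mCirc m (k + 1) := by
      rw [mCirc, Finset.prod_range_succ, ← mCirc]
      exact Nat.mul_pos ih.1 ih.2
    exact ⟨h1, lt_of_lt_of_le (Nat.pow_pos (Nat.pow_pos h1)) (hm.2 (k + 1))⟩

end AuxLemmas

/-- (Claim 8.4.)  Let `μ` be infinite, `κ` regular uncountable with `μ < κ ≤ α`.
If the complete Boolean algebra `B` contains a family `x s f` of nonzero
elements indexed by the finite partial functions from `α` to `μ` (monotone,
pairwise disjoint when incompatible, and dense in `B` — i.e. `B` is the
completion of the free Boolean algebra generated by `α` independent partitions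
each of size `μ`), then `B` has the `(κ, I, m)`-c.c. for every ideal `I` on `ℕ`
and every fast sequence `m`. -/

theorem free_boolean_algebra_ccc (μ κ : Cardinal.{u}) (hμ : Cardinal.aleph0 ≤ μ)
    (hreg : κ.IsRegular) (hunc : Cardinal.aleph0 < κ) (hμκ : μ < κ)
    (α : Ordinal.{u}) (hκα : κ.ord ≤ α)
    {B : Type u} [CompleteBooleanAlgebra B]
    (x : Finset Ordinal.{u} → (Ordinal.{u} → Ordinal.{u}) → B)
    (hne : ∀ s f, ValidPF μ α s f → x s f ≠ ⊥)
    (hmono : ∀ s f s' f', ValidPF μ α s f → ValidPF μ α s' f' → s' ⊆ s →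
      (∀ β ∈ s', f' β = f β) → x s f ≤ x s' f')
    (hdisj : ∀ s f s' f', ValidPF μ α s f → ValidPF μ α s' f' →
      (∃ β ∈ s ∩ s', f β ≠ f' β) → x s f ⊓ x s' f' = ⊥)
    (hdense : ∀ b : B, b ≠ ⊥ → ∃ s f, ValidPF μ α s f ∧ x s f ≤ b)
    (I : Set (Set ℕ)) (hI : IsIdealOnNat I) (m : ℕ → ℕ) (hm : FastSeq m) :
    CCCOn κ I m (Set.univ : Set B) := by
  classical
  intro U2 hU2 a2 ha2
  -- choose dense elements below each a2 t
  have hchoice : ∀ t : κ.ord.ToType, ∃ p : Finset Ordinal.{u} × (Ordinal.{u} → Ordinal.{u}),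
      t ∈ U2 → ValidPF μ α p.1 p.2 ∧ x p.1 p.2 ≤ a2 t := by
    intro t
    by_cases ht : t ∈ U2
    · obtain ⟨s, f, hv, hle⟩ := hdense (a2 t) (ha2 t ht).2
      exact ⟨(s, f), fun _ => ⟨hv, hle⟩⟩
    · exact ⟨(∅, fun _ => 0), fun h => absurd h ht⟩
  choose P hP using hchoice
  set Sd : κ.ord.ToType → Finset Ordinal.{u} := fun t => (P t).1 with hSdd
  set Fd : κ.ord.ToType → Ordinal.{u} → Ordinal.{u} := fun t => (P t).2 with hFdd
  -- Step 1: stabilize the cardinality of the supports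
  obtain ⟨n₀, hn₀⟩ := aux_pigeonhole hreg hU2 (fun t => ULift.up.{u} (Sd t).card)
    (by rw [Cardinal.mk_uLift, Cardinal.mk_nat, Cardinal.lift_aleph0]; exact hunc)
  -- Step 2: delta system
  obtain ⟨S₂, hS₂sub, hS₂κ, r, hr⟩ := aux_delta hreg hunc n₀.down Sd _ hn₀
    (fun t ht => le_of_eq (congrArg ULift.down ht.2))
  -- Step 3: stabilize the pattern on the root
  set pat : κ.ord.ToType → (Fin r.card → Option μ.ord.ToType) := fun t i =>
    if hb : ((r.equivFin.symm i : Ordinal.{u}) ∈ Sd t ∧ Fd t (r.equivFin.symm i) < μ.ord)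
    then some ((Ordinal.ToType.mk (o := μ.ord)) ⟨Fd t (r.equivFin.symm i), hb.2⟩) else none
    with hpat
  have hXκ : Cardinal.mk (Fin r.card → Option μ.ord.ToType) < κ := by
    have h1 : Cardinal.mk (Option μ.ord.ToType) = μ := by
      rw [Cardinal.mk_option, Cardinal.mk_toType, Cardinal.card_ord, Cardinal.add_one_eq hμ]
    have h2 : Cardinal.mk (Fin r.card → Option μ.ord.ToType)
        = μ ^ (r.card : Cardinal.{u}) := by
      simp [Cardinal.mk_arrow, h1, Cardinal.mk_fin]
    rw [h2, Cardinal.power_natCast]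
    exact lt_of_le_of_lt (Cardinal.power_nat_le hμ) hμκ
  obtain ⟨p₀, hp₀⟩ := aux_pigeonhole hreg hS₂κ pat hXκ
  set U₁ : Set κ.ord.ToType := {t | t ∈ S₂ ∧ pat t = p₀} with hU₁d
  have hU₁U₂ : U₁ ⊆ U2 := fun t ht => (hS₂sub ht.1).1
  -- compatibility on the root
  have hcompat : ∀ t ∈ U₁, ∀ t' ∈ U₁, t ≠ t' → ∀ β, β ∈ Sd t → β ∈ Sd t' →
      Fd t β = Fd t' β := by
    intro t ht t' ht' hne' β hβ hβ'
    have hβr : β ∈ r := hr t ht.1 t' ht'.1 hne' (Finset.mem_inter.2 ⟨hβ, hβ'⟩)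
    have hβi : ((r.equivFin.symm (r.equivFin ⟨β, hβr⟩) : Ordinal.{u})) = β := by simp
    have hlt : Fd t β < μ.ord := ((hP t (hU₁U₂ ht)).1 β hβ).2
    have hlt' : Fd t' β < μ.ord := ((hP t' (hU₁U₂ ht')).1 β hβ').2
    have h1 : pat t (r.equivFin ⟨β, hβr⟩) = pat t' (r.equivFin ⟨β, hβr⟩) := by
      rw [ht.2, ht'.2]
    rw [← hβi] at hβ hβ' hlt hlt' ⊢
    rw [hpat] at h1
    simp only [dif_pos (And.intro hβ hlt), dif_pos (And.intro hβ' hlt')] at h1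
    have h2 := Option.some_injective _ h1
    have h3 := (Ordinal.ToType.mk (o := μ.ord)).injective h2
    exact congrArg Subtype.val h3
  refine ⟨0, U₁, hU₁U₂, hp₀, ∅, hI.1 ∅ Set.finite_empty, ?_⟩
  intro n _ u hu i hin hcard1 hcard2
  set sbig : Finset Ordinal.{u} := u.biUnion Sd with hsbig
  set g : Ordinal.{u} → Ordinal.{u} := fun β =>
    if h : ∃ t, t ∈ u ∧ β ∈ Sd t then Fd h.choose β else 0 with hg
  have hkey : ∀ t ∈ u, ∀ β ∈ Sd t, g β = Fd t β := by
    intro t htu β hβ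
    have hex : ∃ t', t' ∈ u ∧ β ∈ Sd t' := ⟨t, htu, hβ⟩
    rw [hg]
    dsimp only
    rw [dif_pos hex]
    obtain ⟨ht'u, hβ'⟩ := hex.choose_spec
    rcases eq_or_ne hex.choose t with h | h
    · rw [h]
    · exact hcompat _ (hu ht'u) t (hu htu) h β hβ' hβ
  have hvbig : ValidPF μ α sbig g := by
    intro β hβ
    obtain ⟨t, htu, hβt⟩ := Finset.mem_biUnion.1 hβ
    have hv := (hP t (hU₁U₂ (hu htu))).1 β hβt
    rw [hkey t htu β hβt]
    exact hv
  have hle : ∀ t ∈ u, x sbig g ≤ a2 t := by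
    intro t htu
    have hv := hP t (hU₁U₂ (hu htu))
    exact le_trans (hmono sbig g (Sd t) (Fd t) hvbig hv.1
      (Finset.subset_biUnion_of_mem Sd htu) (fun β hβ => (hkey t htu β hβ).symm)) hv.2
  refine ⟨u, Finset.Subset.refl u, ?_, ?_⟩
  · exact Nat.le_mul_of_pos_right _ (Nat.pow_pos (aux_mCirc_pos hm n).1)
  · intro hbot
    exact hne sbig g hvbig (le_bot_iff.1 (hbot ▸ Finset.le_inf hle))
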